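/- For each n, the number of M-diagrams on 3n points (partitions of {1,...,3n} into triples (a,b,c) with pairwise non-crossing left arcs and pairwise non-crossing right arcs) equals 2(3n)!/(n!(n+1)!(n+2)!). -/

import Mathlib

/-- An M-diagram on `3n` points: a partition of `Fin (3n)` into `n` triples,
recorded by assigning to each point `i` the left (`a i`), middle (`b i`) and
right (`c i`) endpoints of the triple containing `i`, such that no two left
arcs `(a,b)` cross and no two right arcs `(b,c)` cross. -/
structure MDiagram (n : ℕ) where
  a : Fin (3 * n) → Fin (3 * n)
  b : Fin (3 * n) → Fin (3 * n)
  c : Fin (3 * n) → Fin (3 * n)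
  hab : ∀ i, a i < b i
  hbc : ∀ i, b i < c i
  mem_triple : ∀ i, i = a i ∨ i = b i ∨ i = c i
  coherent : ∀ i j, (j = a i ∨ j = b i ∨ j = c i) →
    a j = a i ∧ b j = b i ∧ c j = c i
  noncrossL : ∀ i j, ¬ (a i < a j ∧ a j < b i ∧ b i < b j)
  noncrossR : ∀ i j, ¬ (b i < b j ∧ b j < c i ∧ c i < c j)

/-- The boundary word of an M-diagram: `+` (= `2 : Fin 3`) at left endpoints,
`0` (= `1`) at middle endpoints, `-` (= `0`) at right endpoints. -/
def mword {n : ℕ} (m : MDiagram n) : Fin (3 * n) → Fin 3 :=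
  fun i => if i = m.a i then 2 else if i = m.b i then 1 else 0

def Fc : ℕ → ℕ → ℕ → ℕ := fun p q r =>
  if q ≤ p ∧ r ≤ q then
    if hp : p = 0 then 1
    else Fc (p-1) q r + (if hq : 0 < q then Fc p (q-1) r else 0)
         + (if hr : 0 < r then Fc p q (r-1) else 0)
  else 0
termination_by p q r => p + q + r
decreasing_by all_goals omega

lemma Fc_of_not (p q r : ℕ) (h : ¬ (q ≤ p ∧ r ≤ q)) : Fc p q r = 0 := by
  rw [Fc]; simp [h]

lemma Fc_zero : Fc 0 0 0 = 1 := by rw [Fc]; simp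

lemma Fc_rec (p q r : ℕ) (h : q ≤ p ∧ r ≤ q) (hp : p ≠ 0) :
    Fc p q r = Fc (p-1) q r + (if 0 < q then Fc p (q-1) r else 0)
      + (if 0 < r then Fc p q (r-1) else 0) := by
  rw [Fc]; simp [h, hp]

lemma Fc_formula : ∀ a b r : ℕ,
    Fc (a+b+r) (r+b) r * (r.factorial * (r+b+1).factorial * (a+b+r+2).factorial)
      = (a+2*b+3*r).factorial * ((a+1)*(b+1)*(a+b+2)) := by
  have main : ∀ n a b r : ℕ, a+2*b+3*r = n →
      Fc (a+b+r) (r+b) r * (r.factorial * (r+b+1).factorial * (a+b+r+2).factorial)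
        = (a+2*b+3*r).factorial * ((a+1)*(b+1)*(a+b+2)) := by
    intro n
    induction n using Nat.strong_induction_on with
    | _ n IH =>
      intro a b r hn
      rcases Nat.eq_zero_or_pos n with h0 | hpos
      · obtain ⟨rfl, rfl, rfl⟩ : a = 0 ∧ b = 0 ∧ r = 0 := by omega
        simp [Fc_zero, Nat.factorial]
      have hp : a+b+r ≠ 0 := by omega
      rw [Fc_rec _ _ _ ⟨by omega, by omega⟩ hp]
      have T1 : Fc (a+b+r-1) (r+b) r * (r.factorial * (r+b+1).factorial * (a+b+r+2).factorial)
          = (a+2*b+3*r-1).factorial * (a*(b+1)*(a+b+1)*(a+b+r+2)) := by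
        rcases Nat.eq_zero_or_pos a with rfl | ha
        · rw [Fc_of_not _ _ _ (by omega)]; simp
        · obtain ⟨a', rfl⟩ : ∃ a', a = a'+1 := ⟨a-1, by omega⟩
          have key := IH (n-1) (by omega) a' b r (by omega)
          rw [show a'+1+b+r-1 = a'+b+r from by omega,
              show a'+1+2*b+3*r-1 = a'+2*b+3*r from by omega,
              show a'+1+b+r+2 = a'+b+r+2+1 from by omega,
              Nat.factorial_succ (a'+b+r+2)]
          have h2 : Fc (a'+b+r) (r+b) r *
                (r.factorial * (r+b+1).factorial * ((a'+b+r+2+1) * (a'+b+r+2).factorial))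
              = ((a'+2*b+3*r).factorial * ((a'+1)*(b+1)*(a'+b+2))) * (a'+b+r+2+1) := by
            rw [← key]; ring
          rw [h2]; ring
      have T2 : (if 0 < r+b then Fc (a+b+r) (r+b-1) r else 0)
            * (r.factorial * (r+b+1).factorial * (a+b+r+2).factorial)
          = (a+2*b+3*r-1).factorial * ((a+2)*b*(a+b+2)*(r+b+1)) := by
        rcases Nat.eq_zero_or_pos b with rfl | hb
        · rcases Nat.eq_zero_or_pos r with rfl | hr
          · simp
          · rw [if_pos (show 0 < r+0 from by omega), Fc_of_not _ _ _ (by omega)]; simp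
        · obtain ⟨b', rfl⟩ : ∃ b', b = b'+1 := ⟨b-1, by omega⟩
          rw [if_pos (show 0 < r+(b'+1) from by omega)]
          have key := IH (n-1) (by omega) (a+1) b' r (by omega)
          rw [show r+(b'+1)-1 = r+b' from by omega,
              show a+(b'+1)+r = a+1+b'+r from by omega,
              show a+2*(b'+1)+3*r-1 = a+1+2*b'+3*r from by omega,
              show r+(b'+1)+1 = r+b'+1+1 from by omega,
              Nat.factorial_succ (r+b'+1)]
          have h2 : Fc (a+1+b'+r) (r+b') r *
                (r.factorial * ((r+b'+1+1) * (r+b'+1).factorial) * (a+1+b'+r+2).factorial)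
              = ((a+1+2*b'+3*r).factorial * ((a+1+1)*(b'+1)*(a+1+b'+2))) * (r+b'+1+1) := by
            rw [← key]; ring
          rw [h2]; ring
      have T3 : (if 0 < r then Fc (a+b+r) (r+b) (r-1) else 0)
            * (r.factorial * (r+b+1).factorial * (a+b+r+2).factorial)
          = (a+2*b+3*r-1).factorial * ((a+1)*(b+2)*(a+b+3)*r) := by
        rcases Nat.eq_zero_or_pos r with rfl | hr
        · simp
        · obtain ⟨r', rfl⟩ : ∃ r', r = r'+1 := ⟨r-1, by omega⟩
          rw [if_pos (show 0 < r'+1 from by omega)]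
          have key := IH (n-1) (by omega) a (b+1) r' (by omega)
          rw [show r'+1-1 = r' from by omega,
              show a+b+(r'+1) = a+(b+1)+r' from by omega,
              show r'+1+b = r'+(b+1) from by omega,
              show a+2*b+3*(r'+1)-1 = a+2*(b+1)+3*r' from by omega,
              Nat.factorial_succ r']
          have h2 : Fc (a+(b+1)+r') (r'+(b+1)) r' *
                (((r'+1) * r'.factorial) * (r'+(b+1)+1).factorial * (a+(b+1)+r'+2).factorial)
              = ((a+2*(b+1)+3*r').factorial * ((a+1)*(b+1+1)*(a+(b+1)+2))) * (r'+1) := by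
            rw [← key]; ring
          rw [h2]; ring
      rw [add_mul, add_mul, T1, T2, T3]
      have hfact : (a+2*b+3*r).factorial = (a+2*b+3*r) * (a+2*b+3*r-1).factorial := by
        obtain ⟨m, hm⟩ : ∃ m, a+2*b+3*r = m+1 := ⟨a+2*b+3*r-1, by omega⟩
        rw [hm, Nat.factorial_succ]; simp
      rw [hfact]
      have key : a*(b+1)*(a+b+1)*(a+b+r+2) + (a+2)*b*(a+b+2)*(r+b+1)
          + (a+1)*(b+2)*(a+b+3)*r = (a+2*b+3*r) * ((a+1)*(b+1)*(a+b+2)) := by ring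
      rw [← Nat.mul_add, ← Nat.mul_add, key]; ring
  intro a b r; exact main (a+2*b+3*r) a b r rfl

def good (w : List (Fin 3)) : Prop :=
  ∀ p, p <+: w → p.count 1 ≤ p.count 2 ∧ p.count 0 ≤ p.count 1

def WS (p q r : ℕ) : Set (List (Fin 3)) :=
  {w | good w ∧ w.count 2 = p ∧ w.count 1 = q ∧ w.count 0 = r}

lemma fin3_cases (x : Fin 3) : x = 0 ∨ x = 1 ∨ x = 2 := by omega

lemma len_eq_counts (w : List (Fin 3)) :
    w.length = w.count 0 + w.count 1 + w.count 2 := by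
  induction w with
  | nil => simp
  | cons x t ih =>
    rcases fin3_cases x with rfl | rfl | rfl <;>
      simp [List.count_cons, ih] <;> omega

lemma WS_finite (p q r : ℕ) : (WS p q r).Finite := by
  apply Set.Finite.subset (List.finite_length_eq (Fin 3) (r+q+p))
  rintro w ⟨-, h2, h1, h0⟩
  simp only [Set.mem_setOf_eq, len_eq_counts w, h0, h1, h2]

lemma WS_guard {p q r : ℕ} (h : ¬ (q ≤ p ∧ r ≤ q)) : WS p q r = ∅ := by
  ext w; simp only [Set.mem_empty_iff_false, iff_false]
  rintro ⟨hg, h2, h1, h0⟩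
  have := hg w List.prefix_rfl
  omega

lemma WS_zero : WS 0 0 0 = {([] : List (Fin 3))} := by
  ext w
  constructor
  · rintro ⟨-, h2, h1, h0⟩
    have := len_eq_counts w
    have : w.length = 0 := by omega
    simpa [List.length_eq_zero_iff] using this
  · rintro rfl
    refine ⟨fun p hp => ?_, by simp, by simp, by simp⟩
    rw [List.prefix_nil] at hp; simp [hp]

lemma good_concat {u : List (Fin 3)} {t : Fin 3} (hu : good u)
    (h : (u ++ [t]).count 1 ≤ (u ++ [t]).count 2 ∧ (u ++ [t]).count 0 ≤ (u ++ [t]).count 1) :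
    good (u ++ [t]) := by
  intro p hp
  rcases (List.prefix_concat_iff).1 hp with rfl | hp
  · exact h
  · exact hu p hp

lemma good_of_concat {u : List (Fin 3)} {t : Fin 3} (hu : good (u ++ [t])) : good u :=
  fun p hp => hu p (hp.trans (List.prefix_append u [t]))

def lastSet (p q r : ℕ) (t : Fin 3) : Set (List (Fin 3)) :=
  {w | w ∈ WS p q r ∧ w.getLast? = some t}

lemma lastSet_decomp {p q r : ℕ} (hg : q ≤ p ∧ r ≤ q) {t : Fin 3} {p' q' r' : ℕ}
    (h2 : p = p' + if t = 2 then 1 else 0) (h1 : q = q' + if t = 1 then 1 else 0)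
    (h0 : r = r' + if t = 0 then 1 else 0) :
    lastSet p q r t = (· ++ [t]) '' WS p' q' r' := by
  ext w
  constructor
  · rintro ⟨⟨hgw, c2, c1, c0⟩, hlast⟩
    have hw : w.dropLast ++ [t] = w := List.dropLast_append_getLast? t hlast
    refine ⟨w.dropLast, ⟨good_of_concat (u := w.dropLast) (t := t) (by rwa [hw]), ?_, ?_, ?_⟩, hw⟩
    · have := congrArg (List.count 2) hw
      simp only [List.count_append, List.count_singleton'] at this
      omega
    · have := congrArg (List.count 1) hw
      simp only [List.count_append, List.count_singleton'] at this
      omega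
    · have := congrArg (List.count 0) hw
      simp only [List.count_append, List.count_singleton'] at this
      omega
  · rintro ⟨u, ⟨hgu, c2, c1, c0⟩, rfl⟩
    have e2 : (u ++ [t]).count 2 = p := by
      simp only [List.count_append, List.count_singleton']; omega
    have e1 : (u ++ [t]).count 1 = q := by
      simp only [List.count_append, List.count_singleton']; omega
    have e0 : (u ++ [t]).count 0 = r := by
      simp only [List.count_append, List.count_singleton']; omega
    refine ⟨⟨good_concat hgu (by rw [e2, e1, e0]; omega), e2, e1, e0⟩, ?_⟩
    simp

lemma WS_union {p q r : ℕ} (hpos : 0 < p + q + r) :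
    WS p q r = lastSet p q r 2 ∪ lastSet p q r 1 ∪ lastSet p q r 0 := by
  ext w
  constructor
  · intro hw
    obtain ⟨hgw, c2, c1, c0⟩ := hw
    have hne : w ≠ [] := by
      intro h; subst h; simp at c2 c1 c0; omega
    have hlast := List.getLast?_eq_getLast_of_ne_nil hne
    rcases fin3_cases (w.getLast hne) with h | h | h
    · exact Or.inr (⟨⟨hgw, c2, c1, c0⟩, by rw [hlast, h]⟩ :
        w ∈ lastSet p q r 0)
    · exact Or.inl (Or.inr (⟨⟨hgw, c2, c1, c0⟩, by rw [hlast, h]⟩ :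
        w ∈ lastSet p q r 1))
    · exact Or.inl (Or.inl (⟨⟨hgw, c2, c1, c0⟩, by rw [hlast, h]⟩ :
        w ∈ lastSet p q r 2))
  · rintro ((h | h) | h) <;> exact h.1

lemma lastSet_disj {p q r : ℕ} {t t' : Fin 3} (h : t ≠ t') :
    Disjoint (lastSet p q r t) (lastSet p q r t') := by
  rw [Set.disjoint_left]
  rintro w ⟨-, h1⟩ ⟨-, h2⟩
  rw [h1] at h2; exact h (by injection h2)

lemma lastSet_finite (p q r : ℕ) (t : Fin 3) : (lastSet p q r t).Finite :=
  (WS_finite p q r).subset (fun w hw => hw.1)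

lemma WS_card_rec {p q r : ℕ} (hg : q ≤ p ∧ r ≤ q) (hp : p ≠ 0) :
    (WS p q r).ncard = (WS (p-1) q r).ncard
      + (if 0 < q then (WS p (q-1) r).ncard else 0)
      + (if 0 < r then (WS p q (r-1)).ncard else 0) := by
  have hpos : 0 < p + q + r := by omega
  rw [WS_union hpos]
  rw [Set.ncard_union_eq (by
        exact Set.disjoint_union_left.2 ⟨lastSet_disj (by decide), lastSet_disj (by decide)⟩)
      (((lastSet_finite p q r 2).union (lastSet_finite p q r 1)))
      (lastSet_finite p q r 0),
    Set.ncard_union_eq (lastSet_disj (by decide)) (lastSet_finite p q r 2)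
      (lastSet_finite p q r 1)]
  have inj : ∀ t : Fin 3, Function.Injective (· ++ [t]) := by
    intro t u1 u2 h; exact List.append_left_injective [t] h
  have e2 : (lastSet p q r 2).ncard = (WS (p-1) q r).ncard := by
    rw [lastSet_decomp hg (p' := p-1) (q' := q) (r' := r) (by simp; omega) (by simp) (by simp),
      Set.ncard_image_of_injective _ (inj 2)]
  have e1 : (lastSet p q r 1).ncard = if 0 < q then (WS p (q-1) r).ncard else 0 := by
    by_cases hq : 0 < q
    · rw [if_pos hq,
        lastSet_decomp hg (p' := p) (q' := q-1) (r' := r) (by simp) (by simp; omega) (by simp),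
        Set.ncard_image_of_injective _ (inj 1)]
    · rw [if_neg hq]
      have : lastSet p q r 1 = ∅ := by
        ext w; simp only [Set.mem_empty_iff_false, iff_false]
        rintro ⟨⟨-, -, c1, -⟩, hlast⟩
        have : (1 : Fin 3) ∈ w := List.mem_of_mem_getLast? hlast
        have := List.count_pos_iff.2 this
        omega
      rw [this]; simp
  have e0 : (lastSet p q r 0).ncard = if 0 < r then (WS p q (r-1)).ncard else 0 := by
    by_cases hr : 0 < r
    · rw [if_pos hr,
        lastSet_decomp hg (p' := p) (q' := q) (r' := r-1) (by simp) (by simp) (by simp; omega),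
        Set.ncard_image_of_injective _ (inj 0)]
    · rw [if_neg hr]
      have : lastSet p q r 0 = ∅ := by
        ext w; simp only [Set.mem_empty_iff_false, iff_false]
        rintro ⟨⟨-, -, -, c0⟩, hlast⟩
        have : (0 : Fin 3) ∈ w := List.mem_of_mem_getLast? hlast
        have := List.count_pos_iff.2 this
        omega
      rw [this]; simp
  rw [e2, e1, e0]

lemma WS_card : ∀ p q r : ℕ, (WS p q r).ncard = Fc p q r := by
  have main : ∀ n p q r : ℕ, p + q + r = n → (WS p q r).ncard = Fc p q r := by
    intro n
    induction n using Nat.strong_induction_on with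
    | _ n IH =>
      intro p q r hn
      by_cases hg : q ≤ p ∧ r ≤ q
      · by_cases hp : p = 0
        · obtain ⟨rfl, rfl, rfl⟩ : p = 0 ∧ q = 0 ∧ r = 0 := by omega
          rw [WS_zero, Fc_zero]; simp
        · rw [WS_card_rec hg hp, Fc_rec p q r hg hp,
            IH (p-1+q+r) (by omega) (p-1) q r rfl]
          congr 1
          · congr 1
            by_cases hq : 0 < q
            · rw [if_pos hq, if_pos hq, IH (p+(q-1)+r) (by omega) p (q-1) r rfl]
            · rw [if_neg hq, if_neg hq]
          · by_cases hr : 0 < r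
            · rw [if_pos hr, if_pos hr, IH (p+q+(r-1)) (by omega) p q (r-1) rfl]
            · rw [if_neg hr, if_neg hr]
      · rw [WS_guard hg, Fc_of_not p q r hg]; simp
  intro p q r; exact main (p+q+r) p q r rfl

structure Walk (N : ℕ) where
  s : ℕ → ℕ
  s0 : s 0 = 0
  sN : s N = 0
  step : ∀ k, k < N → s (k+1) = s k + 1 ∨ s (k+1) = s k ∨ s k = s (k+1) + 1

namespace Walk

variable {N : ℕ} (W : Walk N)

def IsOpen (i : ℕ) : Prop := i < N ∧ W.s (i+1) = W.s i + 1
def IsClose (j : ℕ) : Prop := j < N ∧ W.s j = W.s (j+1) + 1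

lemma nxt_exists {W : Walk N} {i : ℕ} (hi : W.IsOpen i) :
    ∃ k, i < k ∧ k < N ∧ W.s (k+1) ≤ W.s i := by
  have h1 : i + 1 ≠ N := by
    intro h
    have h2 := hi.2
    rw [h, W.sN] at h2
    omega
  have h2 : i + 1 < N := by have := hi.1; omega
  refine ⟨N-1, by omega, by omega, ?_⟩
  have h3 : N - 1 + 1 = N := by omega
  rw [h3, W.sN]
  exact Nat.zero_le _

open scoped Classical in
noncomputable def nxt (i : ℕ) : ℕ :=
  if h : ∃ k, i < k ∧ k < N ∧ W.s (k+1) ≤ W.s i then Nat.find h else 0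

variable {W}

open scoped Classical in
lemma nxt_spec {i : ℕ} (hi : W.IsOpen i) :
    i < W.nxt i ∧ W.nxt i < N ∧ W.s (W.nxt i + 1) ≤ W.s i := by
  rw [nxt, dif_pos (nxt_exists hi)]
  exact Nat.find_spec (nxt_exists hi)

open scoped Classical in
lemma nxt_min {i k : ℕ} (hi : W.IsOpen i) (h1 : i < k) (h2 : k < W.nxt i) :
    W.s i + 1 ≤ W.s (k+1) := by
  have hsp := nxt_spec hi
  have hkN : k < N := by omega
  rw [nxt, dif_pos (nxt_exists hi)] at h2
  have hmin := Nat.find_min (nxt_exists hi) h2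
  by_contra hc
  exact hmin ⟨h1, hkN, by omega⟩

lemma nxt_between {i k : ℕ} (hi : W.IsOpen i) (h1 : i < k) (h2 : k ≤ W.nxt i) :
    W.s i + 1 ≤ W.s k := by
  obtain ⟨m, rfl⟩ : ∃ m, k = m + 1 := ⟨k-1, by omega⟩
  rcases Nat.eq_or_lt_of_le (show i ≤ m by omega) with rfl | him
  · have := hi.2; omega
  · exact nxt_min hi him (by omega)

lemma s_nxt {i : ℕ} (hi : W.IsOpen i) : W.s (W.nxt i) = W.s i + 1 := by
  obtain ⟨h1, h2, h3⟩ := nxt_spec hi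
  have hge := nxt_between hi h1 (le_refl _)
  have := W.step (W.nxt i) h2
  omega

lemma nxt_isClose {i : ℕ} (hi : W.IsOpen i) : W.IsClose (W.nxt i) := by
  obtain ⟨h1, h2, h3⟩ := nxt_spec hi
  have h4 := s_nxt hi
  have := W.step (W.nxt i) h2
  exact ⟨h2, by omega⟩

lemma s_nxt_succ {i : ℕ} (hi : W.IsOpen i) : W.s (W.nxt i + 1) = W.s i := by
  have h4 := s_nxt hi
  have h5 := (nxt_isClose hi).2
  omega

variable (W)

open scoped Classical in
noncomputable def lft (j : ℕ) : ℕ := Nat.findGreatest (fun i => W.s i < W.s j) j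

variable {W}

open scoped Classical in
lemma lft_spec {j : ℕ} (hj : W.IsClose j) :
    W.lft j < j ∧ W.s (W.lft j) < W.s j := by
  have hsj : 0 < W.s j := by have := hj.2; omega
  have hP : W.s (W.lft j) < W.s j := by
    rw [lft]
    exact Nat.findGreatest_spec (P := fun i => W.s i < W.s j) (Nat.zero_le j)
      (by show W.s 0 < W.s j; rw [W.s0]; omega)
  refine ⟨?_, hP⟩
  have hle : W.lft j ≤ j := Nat.findGreatest_le j
  rcases Nat.eq_or_lt_of_le hle with h | h
  · rw [h] at hP; omega
  · exact h

open scoped Classical in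
lemma lft_max {j k : ℕ} (hj : W.IsClose j) (h1 : W.lft j < k) (h2 : k ≤ j) :
    W.s j ≤ W.s k := by
  rw [lft] at h1
  exact Nat.le_of_not_lt
    (Nat.findGreatest_is_greatest (P := fun i => W.s i < W.s j) h1 h2)

lemma lft_isOpen {j : ℕ} (hj : W.IsClose j) :
    W.IsOpen (W.lft j) ∧ W.s j = W.s (W.lft j) + 1 := by
  obtain ⟨hlt, hP⟩ := lft_spec hj
  have hs1 : W.s j ≤ W.s (W.lft j + 1) := lft_max hj (by omega) (by omega)
  have hlN : W.lft j < N := lt_trans hlt hj.1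
  have := W.step (W.lft j) hlN
  have he : W.s (W.lft j + 1) = W.s (W.lft j) + 1 := by omega
  exact ⟨⟨hlN, he⟩, by omega⟩

open scoped Classical in
lemma nxt_lft {j : ℕ} (hj : W.IsClose j) : W.nxt (W.lft j) = j := by
  obtain ⟨hopen, hsj⟩ := lft_isOpen hj
  obtain ⟨hlt, hP⟩ := lft_spec hj
  have hex := nxt_exists hopen
  have hmem : W.lft j < j ∧ j < N ∧ W.s (j+1) ≤ W.s (W.lft j) := by
    refine ⟨hlt, hj.1, ?_⟩
    have := hj.2; omega
  have hle : W.nxt (W.lft j) ≤ j := by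
    rw [nxt, dif_pos hex]; exact Nat.find_min' hex hmem
  rcases Nat.eq_or_lt_of_le hle with h | h
  · exact h
  · exfalso
    obtain ⟨h1, h2, h3⟩ := nxt_spec hopen
    have hband := lft_max hj (show W.lft j < W.nxt (W.lft j) + 1 by omega) (by omega)
    omega

open scoped Classical in
lemma lft_nxt {i : ℕ} (hi : W.IsOpen i) : W.lft (W.nxt i) = i := by
  have hclose := nxt_isClose hi
  have hsn := s_nxt hi
  obtain ⟨h1, h2, h3⟩ := nxt_spec hi
  have hle : i ≤ W.lft (W.nxt i) := by
    rw [lft]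
    exact Nat.le_findGreatest (by omega) (by omega)
  rcases Nat.eq_or_lt_of_le hle with h | h
  · exact h.symm
  · exfalso
    obtain ⟨hlt, hP⟩ := lft_spec hclose
    have := nxt_between hi h (by omega)
    omega

lemma noncross {x y : ℕ} (hx : W.IsOpen x) (hy : W.IsOpen y) :
    ¬ (x < y ∧ y < W.nxt x ∧ W.nxt x < W.nxt y) := by
  rintro ⟨h1, h2, h3⟩
  have hy1 : W.s x + 1 ≤ W.s y := nxt_between hx h1 (by omega)
  have hy2 : W.s y + 1 ≤ W.s (W.nxt x) := nxt_between hy h2 (by omega)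
  have := s_nxt hx
  omega

end Walk

namespace MDiagram

variable {n : ℕ} (m : MDiagram n)

lemma tri_a (i : Fin (3*n)) :
    m.a (m.a i) = m.a i ∧ m.b (m.a i) = m.b i ∧ m.c (m.a i) = m.c i :=
  m.coherent i (m.a i) (Or.inl rfl)

lemma tri_b (i : Fin (3*n)) :
    m.a (m.b i) = m.a i ∧ m.b (m.b i) = m.b i ∧ m.c (m.b i) = m.c i :=
  m.coherent i (m.b i) (Or.inr (Or.inl rfl))

lemma tri_c (i : Fin (3*n)) :
    m.a (m.c i) = m.a i ∧ m.b (m.c i) = m.b i ∧ m.c (m.c i) = m.c i :=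
  m.coherent i (m.c i) (Or.inr (Or.inr rfl))

lemma a_eq_imp {i j : Fin (3*n)} (h : m.a i = m.a j) :
    m.b i = m.b j ∧ m.c i = m.c j := by
  have hi := m.tri_a i
  have hj := m.tri_a j
  rw [h] at hi
  exact ⟨by rw [← hi.2.1, hj.2.1], by rw [← hi.2.2, hj.2.2]⟩

lemma b_eq_imp {i j : Fin (3*n)} (h : m.b i = m.b j) :
    m.a i = m.a j ∧ m.c i = m.c j := by
  have hi := m.tri_b i
  have hj := m.tri_b j
  rw [h] at hi
  exact ⟨by rw [← hi.1, hj.1], by rw [← hi.2.2, hj.2.2]⟩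

lemma c_eq_imp {i j : Fin (3*n)} (h : m.c i = m.c j) :
    m.a i = m.a j ∧ m.b i = m.b j := by
  have hi := m.tri_c i
  have hj := m.tri_c j
  rw [h] at hi
  exact ⟨by rw [← hi.1, hj.1], by rw [← hi.2.1, hj.2.1]⟩

lemma mw_eq_two {i : Fin (3*n)} : mword m i = 2 ↔ i = m.a i := by
  unfold mword
  by_cases h : i = m.a i
  · rw [if_pos h]; exact iff_of_true rfl h
  · rw [if_neg h]
    by_cases h2 : i = m.b i
    · rw [if_pos h2]; exact iff_of_false (by decide) h
    · rw [if_neg h2]; exact iff_of_false (by decide) h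

lemma mw_eq_one {i : Fin (3*n)} : mword m i = 1 ↔ i = m.b i := by
  unfold mword
  by_cases h : i = m.a i
  · rw [if_pos h]
    constructor
    · intro hc; exact absurd hc (by decide)
    · intro hb
      exfalso
      have := m.hab i
      rw [← h, ← hb] at this
      exact lt_irrefl _ this
  · rw [if_neg h]
    by_cases h2 : i = m.b i
    · rw [if_pos h2]; exact iff_of_true rfl h2
    · rw [if_neg h2]
      refine iff_of_false (by decide) h2

lemma mw_eq_zero {i : Fin (3*n)} : mword m i = 0 ↔ i = m.c i := by
  unfold mword
  by_cases h : i = m.a i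
  · rw [if_pos h]
    constructor
    · intro hc; exact absurd hc (by decide)
    · intro hc
      exfalso
      have h1 := m.hab i
      have h2 := m.hbc i
      rw [← h] at h1
      rw [← hc] at h2
      exact absurd (h1.trans h2) (lt_irrefl _)
  · rw [if_neg h]
    by_cases h2 : i = m.b i
    · rw [if_pos h2]
      constructor
      · intro hc; exact absurd hc (by decide)
      · intro hc
        exfalso
        have h3 := m.hbc i
        rw [← h2, ← hc] at h3
        exact lt_irrefl _ h3
    · rw [if_neg h2]
      refine iff_of_true rfl ?_
      rcases m.mem_triple i with h3 | h3 | h3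
      · exact absurd h3 h
      · exact absurd h3 h2
      · exact h3

end MDiagram

variable {n : ℕ}

lemma word_bpoint {m m' : MDiagram n} (hw : mword m = mword m') {j : Fin (3*n)}
    (hj : j = m.b j) : j = m'.b j := by
  rw [← m'.mw_eq_one, ← hw, m.mw_eq_one]; exact hj

lemma word_apoint {m m' : MDiagram n} (hw : mword m = mword m') {j : Fin (3*n)}
    (hj : j = m.a j) : j = m'.a j := by
  rw [← m'.mw_eq_two, ← hw, m.mw_eq_two]; exact hj

lemma word_cpoint {m m' : MDiagram n} (hw : mword m = mword m') {j : Fin (3*n)}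
    (hj : j = m.c j) : j = m'.c j := by
  rw [← m'.mw_eq_zero, ← hw, m.mw_eq_zero]; exact hj

lemma a_aux (m m' : MDiagram n) (hw : mword m = mword m') (j : Fin (3*n))
    (hj : j = m.b j)
    (IH : ∀ j' : Fin (3*n), j'.val < j.val → j' = m.b j' → m.a j' = m'.a j') :
    ¬ (m.a j < m'.a j) := by
  intro hlt
  have hj' : j = m'.b j := word_bpoint hw hj
  set i := m'.a j with hi
  have hij : i < j := by
    have := m'.hab j; rw [← hj'] at this; exact this
  have hai' : i = m'.a i := (m'.tri_a j).1.symm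
  have hai : i = m.a i := word_apoint hw.symm hai'
  set j2 := m.b i with hj2def
  have h_i_lt_j2 : i < j2 := by
    have := m.hab i; rw [← hai] at this; exact this
  have haj2 : m.a j2 = i := by rw [hj2def, (m.tri_b i).1, ← hai]
  have hbj2 : m.b j2 = j2 := by rw [hj2def, (m.tri_b i).2.1]
  have hne : j2 ≠ j := by
    intro h
    rw [h] at haj2
    rw [haj2] at hlt
    exact lt_irrefl _ hlt
  have hnc := m.noncrossL j i
  rw [← hai, ← hj] at hnc
  have hj2j : j2 < j := by
    have : ¬ (j < j2) := fun hc => hnc ⟨hlt, hij, hc⟩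
    exact lt_of_le_of_ne (le_of_not_gt this) hne
  have hIH := IH j2 hj2j hbj2.symm
  rw [haj2] at hIH
  -- hIH : i = m'.a j2
  have hb2 : m'.b j2 = m'.b j := by
    have e1 : m'.b (m'.a j2) = m'.b j2 := (m'.tri_a j2).2.1
    have e2 : m'.b (m'.a j) = m'.b j := (m'.tri_a j).2.1
    rw [← hIH] at e1
    rw [← hi] at e2
    rw [← e1, ← e2]
  have hbj2' : j2 = m'.b j2 := word_bpoint hw hbj2.symm
  rw [hbj2', hb2, ← hj'] at hne
  exact hne rfl

lemma c_aux (m m' : MDiagram n) (hw : mword m = mword m') (j : Fin (3*n))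
    (hj : j = m.b j)
    (IH : ∀ j' : Fin (3*n), j.val < j'.val → j' = m.b j' → m.c j' = m'.c j') :
    ¬ (m'.c j < m.c j) := by
  intro hlt
  have hj' : j = m'.b j := word_bpoint hw hj
  set i := m'.c j with hi
  have hij : j < i := by
    have := m'.hbc j; rw [← hj'] at this; exact this
  have hci' : i = m'.c i := (m'.tri_c j).2.2.symm
  have hci : i = m.c i := word_cpoint hw.symm hci'
  set j2 := m.b i with hj2def
  have h_j2_lt_i : j2 < i := by
    have h5 := m.hbc i
    rw [← hci] at h5
    exact h5
  have hcj2 : m.c j2 = i := by rw [hj2def, (m.tri_b i).2.2, ← hci]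
  have hbj2 : m.b j2 = j2 := by rw [hj2def, (m.tri_b i).2.1]
  have hne : j2 ≠ j := by
    intro h
    rw [h] at hcj2
    rw [hcj2] at hlt
    exact lt_irrefl _ hlt
  have hnc := m.noncrossR i j
  rw [← hci, ← hj, ← hj2def] at hnc
  have hj2j : j < j2 := by
    have : ¬ (j2 < j) := fun hc => hnc ⟨hc, hij, hlt⟩
    exact lt_of_le_of_ne (le_of_not_gt this) (Ne.symm hne)
  have hIH := IH j2 hj2j hbj2.symm
  rw [hcj2] at hIH
  have hb2 : m'.b j2 = m'.b j := by
    have e1 : m'.b (m'.c j2) = m'.b j2 := (m'.tri_c j2).2.1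
    have e2 : m'.b (m'.c j) = m'.b j := (m'.tri_c j).2.1
    rw [← hIH] at e1
    rw [← hi] at e2
    rw [← e1, ← e2]
  have hbj2' : j2 = m'.b j2 := word_bpoint hw hbj2.symm
  rw [hbj2', hb2, ← hj'] at hne
  exact hne rfl

lemma a_agree (m m' : MDiagram n) (hw : mword m = mword m') :
    ∀ j : Fin (3*n), j = m.b j → m.a j = m'.a j := by
  have main : ∀ v : ℕ, ∀ j : Fin (3*n), j.val = v → j = m.b j → m.a j = m'.a j := by
    intro v
    induction v using Nat.strong_induction_on with
    | _ v IHv =>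
      intro j hjv hj
      have IH : ∀ j' : Fin (3*n), j'.val < j.val → j' = m.b j' → m.a j' = m'.a j' :=
        fun j' hlt hbj' => IHv j'.val (by omega) j' rfl hbj'
      have IH' : ∀ j' : Fin (3*n), j'.val < j.val → j' = m'.b j' → m'.a j' = m.a j' :=
        fun j' hlt hbj' =>
          (IHv j'.val (by omega) j' rfl (word_bpoint hw.symm hbj')).symm
      have h1 := a_aux m m' hw j hj IH
      have h2 := a_aux m' m hw.symm j (word_bpoint hw hj) IH'
      exact le_antisymm (le_of_not_gt h2) (le_of_not_gt h1)
  exact fun j => main j.val j rfl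

lemma c_agree (m m' : MDiagram n) (hw : mword m = mword m') :
    ∀ j : Fin (3*n), j = m.b j → m.c j = m'.c j := by
  have main : ∀ v : ℕ, ∀ j : Fin (3*n), 3*n - j.val = v → j = m.b j → m.c j = m'.c j := by
    intro v
    induction v using Nat.strong_induction_on with
    | _ v IHv =>
      intro j hjv hj
      have IH : ∀ j' : Fin (3*n), j.val < j'.val → j' = m.b j' → m.c j' = m'.c j' :=
        fun j' hlt hbj' => IHv (3*n - j'.val) (by have := j'.isLt; omega) j' rfl hbj'
      have IH' : ∀ j' : Fin (3*n), j.val < j'.val → j' = m'.b j' → m'.c j' = m.c j' :=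
        fun j' hlt hbj' =>
          (IHv (3*n - j'.val) (by have := j'.isLt; omega) j' rfl
            (word_bpoint hw.symm hbj')).symm
      have h1 := c_aux m m' hw j hj IH
      have h2 := c_aux m' m hw.symm j (word_bpoint hw hj) IH'
      exact le_antisymm (le_of_not_gt h1) (le_of_not_gt h2)
  exact fun j => main (3*n - j.val) j rfl

lemma mword_injective (m m' : MDiagram n) (hw : mword m = mword m') : m = m' := by
  have hb : ∀ i, m.b i = m'.b i := by
    intro i
    rcases m.mem_triple i with h | h | h
    · -- i is an a-point
      have h' : i = m'.a i := word_apoint hw h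
      set j := m.b i with hj
      have hbj : j = m.b j := by rw [hj, (m.tri_b i).2.1]
      have haj : m.a j = i := by rw [hj, (m.tri_b i).1, ← h]
      have haj' : m'.a j = i := by rw [← a_agree m m' hw j hbj, haj]
      set j' := m'.b i with hj'
      have haj2 : m'.a j' = i := by rw [hj', (m'.tri_b i).1, ← h']
      have : m'.b j = m'.b j' := by
        have e1 : m'.b (m'.a j) = m'.b j := (m'.tri_a j).2.1
        have e2 : m'.b (m'.a j') = m'.b j' := (m'.tri_a j').2.1
        rw [haj2] at e2
        rw [haj'] at e1
        rw [← e1, ← e2]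
      have hbj'' : j = m'.b j := word_bpoint hw hbj
      have hfix : m'.b j' = j' := by rw [hj', (m'.tri_b i).2.1]
      show j = j'
      rw [hbj'', this, hfix]
    · -- b-point
      rw [← h, ← word_bpoint hw h]
    · -- c-point
      have h' : i = m'.c i := word_cpoint hw h
      set j := m.b i with hj
      have hbj : j = m.b j := by rw [hj, (m.tri_b i).2.1]
      have hcj : m.c j = i := by rw [hj, (m.tri_b i).2.2, ← h]
      have hcj' : m'.c j = i := by rw [← c_agree m m' hw j hbj, hcj]
      set j' := m'.b i with hj'
      have hcj2 : m'.c j' = i := by rw [hj', (m'.tri_b i).2.2, ← h']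
      have : m'.b j = m'.b j' := by
        have e1 : m'.b (m'.c j) = m'.b j := (m'.tri_c j).2.1
        have e2 : m'.b (m'.c j') = m'.b j' := (m'.tri_c j').2.1
        rw [hcj2] at e2
        rw [hcj'] at e1
        rw [← e1, ← e2]
      have hbj'' : j = m'.b j := word_bpoint hw hbj
      have hfix : m'.b j' = j' := by rw [hj', (m'.tri_b i).2.1]
      show j = j'
      rw [hbj'', this, hfix]
  have ha : ∀ i, m.a i = m'.a i := by
    intro i
    have hbi : m.b i = m.b (m.b i) := (m.tri_b i).2.1.symm
    have h1 : m.a (m.b i) = m.a i := (m.tri_b i).1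
    have h2 : m'.a (m'.b i) = m'.a i := (m'.tri_b i).1
    have h3 := a_agree m m' hw (m.b i) hbi
    rw [h1] at h3
    rw [h3, hb i, h2]
  have hc : ∀ i, m.c i = m'.c i := by
    intro i
    have hbi : m.b i = m.b (m.b i) := (m.tri_b i).2.1.symm
    have h1 : m.c (m.b i) = m.c i := (m.tri_b i).2.2
    have h2 : m'.c (m'.b i) = m'.c i := (m'.tri_b i).2.2
    have h3 := c_agree m m' hw (m.b i) hbi
    rw [h1] at h3
    rw [h3, hb i, h2]
  cases m; cases m'
  simp only [MDiagram.mk.injEq]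
  exact ⟨funext ha, funext hb, funext hc⟩

def cnt {N : ℕ} (w : Fin N → Fin 3) (t : Fin 3) (k : ℕ) : ℕ :=
  ((List.ofFn w).take k).count t

lemma cnt_zero {N : ℕ} (w : Fin N → Fin 3) (t : Fin 3) : cnt w t 0 = 0 := by
  simp [cnt]

lemma cnt_succ {N : ℕ} (w : Fin N → Fin 3) (t : Fin 3) {k : ℕ} (hk : k < N) :
    cnt w t (k+1) = cnt w t k + if w ⟨k, hk⟩ = t then 1 else 0 := by
  unfold cnt
  rw [List.take_succ]
  have h1 : (List.ofFn w)[k]? = some (w ⟨k, hk⟩) := by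
    rw [List.getElem?_ofFn, dif_pos hk]
  rw [h1, List.count_append]
  simp [List.count_singleton']
lemma cnt_N {N : ℕ} (w : Fin N → Fin 3) (t : Fin 3) :
    cnt w t N = (List.ofFn w).count t := by
  unfold cnt
  rw [List.take_of_length_le (by simp)]

lemma cnt_card {N : ℕ} (w : Fin N → Fin 3) (t : Fin 3) : ∀ k, k ≤ N →
    cnt w t k = (Finset.univ.filter (fun i : Fin N => i.val < k ∧ w i = t)).card := by
  intro k
  induction k with
  | zero =>
    intro _
    rw [cnt_zero]
    symm
    rw [Finset.card_eq_zero, Finset.filter_eq_empty_iff]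
    intro i _
    simp
  | succ k ih =>
    intro hk1
    have hk : k < N := by omega
    rw [cnt_succ w t hk, ih (by omega)]
    have hsplit : (Finset.univ.filter (fun i : Fin N => i.val < k+1 ∧ w i = t))
        = (Finset.univ.filter (fun i : Fin N => i.val < k ∧ w i = t))
          ∪ (Finset.univ.filter (fun i : Fin N => i.val = k ∧ w i = t)) := by
      ext i
      simp only [Finset.mem_filter, Finset.mem_union, Finset.mem_univ, true_and]
      by_cases h : w i = t
      · simp only [h, and_true]; omega
      · simp only [h, and_false]; tauto
    rw [hsplit, Finset.card_union_of_disjoint (by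
      rw [Finset.disjoint_left]
      rintro i hi1 hi2
      simp only [Finset.mem_filter] at hi1 hi2
      omega)]
    congr 1
    by_cases h : w ⟨k, hk⟩ = t
    · rw [if_pos h]
      symm
      rw [Finset.card_eq_one]
      refine ⟨⟨k, hk⟩, ?_⟩
      ext i
      simp only [Finset.mem_filter, Finset.mem_univ, true_and, Finset.mem_singleton]
      constructor
      · rintro ⟨h1, h2⟩; exact Fin.ext h1
      · rintro rfl; exact ⟨rfl, h⟩
    · rw [if_neg h]
      symm
      rw [Finset.card_eq_zero, Finset.filter_eq_empty_iff]
      rintro i -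
      rintro ⟨h1, h2⟩
      exact h (by rwa [show (⟨k, hk⟩ : Fin N) = i from (Fin.ext h1.symm)])

section MwordMem

variable {n : ℕ} (m : MDiagram n)

open MDiagram

lemma filter_sub_21 {k : ℕ} (hk : k ≤ 3*n) :
    (Finset.univ.filter (fun i : Fin (3*n) => i.val < k ∧ mword m i = 1)).card
      ≤ (Finset.univ.filter (fun i : Fin (3*n) => i.val < k ∧ mword m i = 2)).card := by
  apply Finset.card_le_card_of_injOn (fun i => m.a i)
  · intro i hi
    simp only [Finset.mem_coe, Finset.mem_filter, Finset.mem_univ, true_and] at hi ⊢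
    obtain ⟨hik, hw⟩ := hi
    have hb : i = m.b i := (m.mw_eq_one).1 hw
    have hlt : (m.a i).val < i.val := by
      have := m.hab i; rw [← hb] at this; exact this
    refine ⟨by omega, ?_⟩
    rw [m.mw_eq_two]
    exact (m.tri_a i).1.symm
  · intro i hi i' hi' he
    simp only [Finset.coe_filter, Set.mem_setOf_eq] at hi hi'
    have hb : i = m.b i := (m.mw_eq_one).1 hi.2.2
    have hb' : i' = m.b i' := (m.mw_eq_one).1 hi'.2.2
    have := (m.a_eq_imp he).1
    rw [← hb, ← hb'] at this
    exact this

lemma filter_sub_10 {k : ℕ} (hk : k ≤ 3*n) :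
    (Finset.univ.filter (fun i : Fin (3*n) => i.val < k ∧ mword m i = 0)).card
      ≤ (Finset.univ.filter (fun i : Fin (3*n) => i.val < k ∧ mword m i = 1)).card := by
  apply Finset.card_le_card_of_injOn (fun i => m.b i)
  · intro i hi
    simp only [Finset.mem_coe, Finset.mem_filter, Finset.mem_univ, true_and] at hi ⊢
    obtain ⟨hik, hw⟩ := hi
    have hc : i = m.c i := (m.mw_eq_zero).1 hw
    have hlt : (m.b i).val < i.val := by
      have := m.hbc i; rw [← hc] at this; exact this
    refine ⟨by omega, ?_⟩
    rw [m.mw_eq_one]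
    exact (m.tri_b i).2.1.symm
  · intro i hi i' hi' he
    simp only [Finset.coe_filter, Set.mem_setOf_eq] at hi hi'
    have hc : i = m.c i := (m.mw_eq_zero).1 hi.2.2
    have hc' : i' = m.c i' := (m.mw_eq_zero).1 hi'.2.2
    have := (m.b_eq_imp he).2
    rw [← hc, ← hc'] at this
    exact this

lemma filter_sub_12 :
    (Finset.univ.filter (fun i : Fin (3*n) => i.val < 3*n ∧ mword m i = 2)).card
      ≤ (Finset.univ.filter (fun i : Fin (3*n) => i.val < 3*n ∧ mword m i = 1)).card := by
  apply Finset.card_le_card_of_injOn (fun i => m.b i)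
  · intro i hi
    simp only [Finset.mem_coe, Finset.mem_filter, Finset.mem_univ, true_and] at hi ⊢
    refine ⟨(m.b i).isLt, ?_⟩
    rw [m.mw_eq_one]
    exact (m.tri_b i).2.1.symm
  · intro i hi i' hi' he
    simp only [Finset.coe_filter, Set.mem_setOf_eq] at hi hi'
    have ha : i = m.a i := (m.mw_eq_two).1 hi.2.2
    have ha' : i' = m.a i' := (m.mw_eq_two).1 hi'.2.2
    have := (m.b_eq_imp he).1
    rw [← ha, ← ha'] at this
    exact this

lemma filter_sub_01 :
    (Finset.univ.filter (fun i : Fin (3*n) => i.val < 3*n ∧ mword m i = 1)).card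
      ≤ (Finset.univ.filter (fun i : Fin (3*n) => i.val < 3*n ∧ mword m i = 0)).card := by
  apply Finset.card_le_card_of_injOn (fun i => m.c i)
  · intro i hi
    simp only [Finset.mem_coe, Finset.mem_filter, Finset.mem_univ, true_and] at hi ⊢
    refine ⟨(m.c i).isLt, ?_⟩
    rw [m.mw_eq_zero]
    exact (m.tri_c i).2.2.symm
  · intro i hi i' hi' he
    simp only [Finset.coe_filter, Set.mem_setOf_eq] at hi hi'
    have hb : i = m.b i := (m.mw_eq_one).1 hi.2.2
    have hb' : i' = m.b i' := (m.mw_eq_one).1 hi'.2.2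
    have := (m.c_eq_imp he).2
    rw [← hb, ← hb'] at this
    exact this

lemma mword_dom {k : ℕ} (hk : k ≤ 3*n) :
    cnt (mword m) 1 k ≤ cnt (mword m) 2 k ∧ cnt (mword m) 0 k ≤ cnt (mword m) 1 k := by
  rw [cnt_card _ _ k hk, cnt_card _ _ k hk, cnt_card _ _ k hk]
  exact ⟨filter_sub_21 m hk, filter_sub_10 m hk⟩

lemma mword_counts :
    cnt (mword m) 2 (3*n) = n ∧ cnt (mword m) 1 (3*n) = n ∧ cnt (mword m) 0 (3*n) = n := by
  have h1 := (mword_dom m (le_refl (3*n))).1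
  have h2 := (mword_dom m (le_refl (3*n))).2
  have h3 : cnt (mword m) 2 (3*n) ≤ cnt (mword m) 1 (3*n) := by
    rw [cnt_card _ _ _ (le_refl _), cnt_card _ _ _ (le_refl _)]
    exact filter_sub_12 m
  have h4 : cnt (mword m) 1 (3*n) ≤ cnt (mword m) 0 (3*n) := by
    rw [cnt_card _ _ _ (le_refl _), cnt_card _ _ _ (le_refl _)]
    exact filter_sub_01 m
  have hlen := len_eq_counts (List.ofFn (mword m))
  rw [List.length_ofFn] at hlen
  rw [← cnt_N, ← cnt_N, ← cnt_N] at hlen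
  omega

lemma mword_mem_WS : List.ofFn (mword m) ∈ WS n n n := by
  obtain ⟨h2, h1, h0⟩ := mword_counts m
  refine ⟨?_, by rw [← cnt_N]; exact h2, by rw [← cnt_N]; exact h1, by rw [← cnt_N]; exact h0⟩
  intro p hp
  have hlp : p.length ≤ 3*n := by
    have := hp.length_le; simpa using this
  have hpe : p = (List.ofFn (mword m)).take p.length := List.prefix_iff_eq_take.1 hp
  have e : ∀ t, p.count t = cnt (mword m) t p.length := by
    intro t
    unfold cnt
    exact congrArg (List.count t) hpe
  rw [e, e, e]
  exact ⟨(mword_dom m hlp).1, (mword_dom m hlp).2⟩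

end MwordMem

section Surj

variable {n : ℕ} (v : Fin (3*n) → Fin 3)

def vdom : Prop :=
  (∀ k, cnt v 1 k ≤ cnt v 2 k ∧ cnt v 0 k ≤ cnt v 1 k)
    ∧ cnt v 2 (3*n) = n ∧ cnt v 1 (3*n) = n ∧ cnt v 0 (3*n) = n

variable (h : vdom v)

def walk2 : Walk (3*n) where
  s := fun k => cnt v 2 k - cnt v 1 k
  s0 := by simp [cnt_zero]
  sN := by
    show cnt v 2 (3*n) - cnt v 1 (3*n) = 0
    obtain ⟨hA, hB, hC⟩ := h.2
    omega
  step := by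
    intro k hk
    have e2 := cnt_succ v 2 hk
    have e1 := cnt_succ v 1 hk
    have d1 := (h.1 k).1
    have d2 := (h.1 (k+1)).1
    show cnt v 2 (k+1) - cnt v 1 (k+1) = cnt v 2 k - cnt v 1 k + 1
      ∨ cnt v 2 (k+1) - cnt v 1 (k+1) = cnt v 2 k - cnt v 1 k
      ∨ cnt v 2 k - cnt v 1 k = cnt v 2 (k+1) - cnt v 1 (k+1) + 1
    rcases fin3_cases (v ⟨k, hk⟩) with hv | hv | hv <;> rw [hv] at e2 e1 <;>
      simp at e2 e1 <;> omega

def walk1 : Walk (3*n) where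
  s := fun k => cnt v 1 k - cnt v 0 k
  s0 := by simp [cnt_zero]
  sN := by
    show cnt v 1 (3*n) - cnt v 0 (3*n) = 0
    obtain ⟨hA, hB, hC⟩ := h.2
    omega
  step := by
    intro k hk
    have e1 := cnt_succ v 1 hk
    have e0 := cnt_succ v 0 hk
    have d1 := (h.1 k).2
    have d2 := (h.1 (k+1)).2
    show cnt v 1 (k+1) - cnt v 0 (k+1) = cnt v 1 k - cnt v 0 k + 1
      ∨ cnt v 1 (k+1) - cnt v 0 (k+1) = cnt v 1 k - cnt v 0 k
      ∨ cnt v 1 k - cnt v 0 k = cnt v 1 (k+1) - cnt v 0 (k+1) + 1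
    rcases fin3_cases (v ⟨k, hk⟩) with hv | hv | hv <;> rw [hv] at e1 e0 <;>
      simp at e1 e0 <;> omega

lemma step_facts {k : ℕ} (hk : k < 3*n) :
    (v ⟨k, hk⟩ = 2 → (walk2 v h).s (k+1) = (walk2 v h).s k + 1
        ∧ (walk1 v h).s (k+1) = (walk1 v h).s k)
    ∧ (v ⟨k, hk⟩ = 1 → (walk2 v h).s k = (walk2 v h).s (k+1) + 1
        ∧ (walk1 v h).s (k+1) = (walk1 v h).s k + 1)
    ∧ (v ⟨k, hk⟩ = 0 → (walk2 v h).s (k+1) = (walk2 v h).s k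
        ∧ (walk1 v h).s k = (walk1 v h).s (k+1) + 1) := by
  have e2 := cnt_succ v 2 hk
  have e1 := cnt_succ v 1 hk
  have e0 := cnt_succ v 0 hk
  have d1 := (h.1 k).1
  have d2 := (h.1 (k+1)).1
  have d3 := (h.1 k).2
  have d4 := (h.1 (k+1)).2
  have hs2 : ∀ j, (walk2 v h).s j = cnt v 2 j - cnt v 1 j := fun _ => rfl
  have hs1 : ∀ j, (walk1 v h).s j = cnt v 1 j - cnt v 0 j := fun _ => rfl
  refine ⟨fun hv => ?_, fun hv => ?_, fun hv => ?_⟩ <;> rw [hv] at e2 e1 e0 <;>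
    rw [hs2, hs2, hs1, hs1] <;> simp at e2 e1 e0 <;> omega

lemma letter2_open {k : ℕ} (hk : k < 3*n) :
    (walk2 v h).IsOpen k ↔ v ⟨k, hk⟩ = 2 := by
  have hf := step_facts v h hk
  constructor
  · intro ho
    rcases fin3_cases (v ⟨k, hk⟩) with hv | hv | hv
    · have := (hf.2.2 hv).1; have := ho.2; omega
    · have := (hf.2.1 hv).1; have := ho.2; omega
    · exact hv
  · intro hv
    exact ⟨hk, (hf.1 hv).1⟩

lemma letter2_close {k : ℕ} (hk : k < 3*n) :
    (walk2 v h).IsClose k ↔ v ⟨k, hk⟩ = 1 := by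
  have hf := step_facts v h hk
  constructor
  · intro ho
    rcases fin3_cases (v ⟨k, hk⟩) with hv | hv | hv
    · have := (hf.2.2 hv).1; have := ho.2; omega
    · exact hv
    · have := (hf.1 hv).1; have := ho.2; omega
  · intro hv
    exact ⟨hk, (hf.2.1 hv).1⟩

lemma letter1_open {k : ℕ} (hk : k < 3*n) :
    (walk1 v h).IsOpen k ↔ v ⟨k, hk⟩ = 1 := by
  have hf := step_facts v h hk
  constructor
  · intro ho
    rcases fin3_cases (v ⟨k, hk⟩) with hv | hv | hv
    · have := (hf.2.2 hv).2; have := ho.2; omega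
    · exact hv
    · have := (hf.1 hv).2; have := ho.2; omega
  · intro hv
    exact ⟨hk, (hf.2.1 hv).2⟩

lemma letter1_close {k : ℕ} (hk : k < 3*n) :
    (walk1 v h).IsClose k ↔ v ⟨k, hk⟩ = 0 := by
  have hf := step_facts v h hk
  constructor
  · intro ho
    rcases fin3_cases (v ⟨k, hk⟩) with hv | hv | hv
    · exact hv
    · have := (hf.2.1 hv).2; have := ho.2; omega
    · have := (hf.1 hv).2; have := ho.2; omega
  · intro hv
    exact ⟨hk, (hf.2.2 hv).2⟩

noncomputable def bfn (i : Fin (3*n)) : ℕ :=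
  if v i = 2 then (walk2 v h).nxt i.val
  else if v i = 1 then i.val
  else (walk1 v h).lft i.val

lemma bfn_spec (i : Fin (3*n)) :
    (walk2 v h).IsClose (bfn v h i) ∧ (walk1 v h).IsOpen (bfn v h i) := by
  rcases fin3_cases (v i) with hv | hv | hv
  · -- v i = 0 : bfn = W1.lft i
    have hcl : (walk1 v h).IsClose i.val := (letter1_close v h i.isLt).2 hv
    have hb : bfn v h i = (walk1 v h).lft i.val := by
      rw [bfn, if_neg (by rw [hv]; decide), if_neg (by rw [hv]; decide)]
    have hop : (walk1 v h).IsOpen ((walk1 v h).lft i.val) := (Walk.lft_isOpen hcl).1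
    rw [hb]
    refine ⟨?_, hop⟩
    have hlt : (walk1 v h).lft i.val < 3*n := hop.1
    have := (letter1_open v h hlt).1 hop
    exact (letter2_close v h hlt).2 this
  · -- v i = 1 : bfn = i
    have hb : bfn v h i = i.val := by
      rw [bfn, if_neg (by rw [hv]; decide), if_pos hv]
    rw [hb]
    exact ⟨(letter2_close v h i.isLt).2 hv, (letter1_open v h i.isLt).2 hv⟩
  · -- v i = 2 : bfn = W2.nxt i
    have hop : (walk2 v h).IsOpen i.val := (letter2_open v h i.isLt).2 hv
    have hb : bfn v h i = (walk2 v h).nxt i.val := by rw [bfn, if_pos hv]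
    have hcl : (walk2 v h).IsClose ((walk2 v h).nxt i.val) := Walk.nxt_isClose hop
    rw [hb]
    refine ⟨hcl, ?_⟩
    have hlt := hcl.1
    have := (letter2_close v h hlt).1 hcl
    exact (letter1_open v h hlt).2 this

lemma bfn_lt (i : Fin (3*n)) : bfn v h i < 3*n := (bfn_spec v h i).1.1

lemma bfn_letter (i : Fin (3*n)) : v ⟨bfn v h i, bfn_lt v h i⟩ = 1 :=
  (letter2_close v h (bfn_lt v h i)).1 (bfn_spec v h i).1

noncomputable def Bf (i : Fin (3*n)) : Fin (3*n) := ⟨bfn v h i, bfn_lt v h i⟩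

noncomputable def Af (i : Fin (3*n)) : Fin (3*n) :=
  ⟨(walk2 v h).lft (bfn v h i),
    lt_trans (Walk.lft_spec (bfn_spec v h i).1).1 (bfn_lt v h i)⟩

noncomputable def Cf (i : Fin (3*n)) : Fin (3*n) :=
  ⟨(walk1 v h).nxt (bfn v h i), (Walk.nxt_spec (bfn_spec v h i).2).2.1⟩

lemma bfn_val2 {i : Fin (3*n)} (hv : v i = 2) :
    i.val = (walk2 v h).lft (bfn v h i) := by
  have hop : (walk2 v h).IsOpen i.val := (letter2_open v h i.isLt).2 hv
  have hb : bfn v h i = (walk2 v h).nxt i.val := by rw [bfn, if_pos hv]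
  rw [hb, Walk.lft_nxt hop]

lemma bfn_val1 {i : Fin (3*n)} (hv : v i = 1) : bfn v h i = i.val := by
  rw [bfn, if_neg (by rw [hv]; decide), if_pos hv]

lemma bfn_val0 {i : Fin (3*n)} (hv : v i = 0) :
    i.val = (walk1 v h).nxt (bfn v h i) := by
  have hcl : (walk1 v h).IsClose i.val := (letter1_close v h i.isLt).2 hv
  have hb : bfn v h i = (walk1 v h).lft i.val := by
    rw [bfn, if_neg (by rw [hv]; decide), if_neg (by rw [hv]; decide)]
  rw [hb, Walk.nxt_lft hcl]

lemma bfn_Af (i : Fin (3*n)) : bfn v h (Af v h i) = bfn v h i := by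
  have hop : (walk2 v h).IsOpen ((Af v h i).val) := (Walk.lft_isOpen (bfn_spec v h i).1).1
  have hv : v (Af v h i) = 2 := by
    have := (letter2_open v h (Af v h i).isLt).1 hop
    simpa using this
  rw [bfn, if_pos hv]
  show (walk2 v h).nxt ((walk2 v h).lft (bfn v h i)) = bfn v h i
  exact Walk.nxt_lft (bfn_spec v h i).1

lemma bfn_Bf (i : Fin (3*n)) : bfn v h (Bf v h i) = bfn v h i := by
  have hv : v (Bf v h i) = 1 := bfn_letter v h i
  rw [bfn_val1 v h hv]
  rfl

lemma bfn_Cf (i : Fin (3*n)) : bfn v h (Cf v h i) = bfn v h i := by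
  have hcl : (walk1 v h).IsClose ((Cf v h i).val) := Walk.nxt_isClose (bfn_spec v h i).2
  have hv : v (Cf v h i) = 0 := by
    have := (letter1_close v h (Cf v h i).isLt).1 hcl
    simpa using this
  rw [bfn, if_neg (by rw [hv]; decide), if_neg (by rw [hv]; decide)]
  show (walk1 v h).lft ((walk1 v h).nxt (bfn v h i)) = bfn v h i
  exact Walk.lft_nxt (bfn_spec v h i).2

noncomputable def mkDiagram : MDiagram n where
  a := Af v h
  b := Bf v h
  c := Cf v h
  hab := fun i => (Walk.lft_spec (bfn_spec v h i).1).1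
  hbc := fun i => (Walk.nxt_spec (bfn_spec v h i).2).1
  mem_triple := by
    intro i
    rcases fin3_cases (v i) with hv | hv | hv
    · exact Or.inr (Or.inr (Fin.ext (bfn_val0 v h hv)))
    · exact Or.inr (Or.inl (Fin.ext (bfn_val1 v h hv).symm))
    · exact Or.inl (Fin.ext (bfn_val2 v h hv))
  coherent := by
    intro i j hj
    have key : bfn v h j = bfn v h i := by
      rcases hj with rfl | rfl | rfl
      · exact bfn_Af v h i
      · exact bfn_Bf v h i
      · exact bfn_Cf v h i
    refine ⟨Fin.ext ?_, Fin.ext ?_, Fin.ext ?_⟩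
    · show (walk2 v h).lft (bfn v h j) = (walk2 v h).lft (bfn v h i)
      rw [key]
    · show bfn v h j = bfn v h i
      exact key
    · show (walk1 v h).nxt (bfn v h j) = (walk1 v h).nxt (bfn v h i)
      rw [key]
  noncrossL := by
    intro i j hc
    obtain ⟨h1, h2, h3⟩ := hc
    have hoi : (walk2 v h).IsOpen ((Af v h i).val) := (Walk.lft_isOpen (bfn_spec v h i).1).1
    have hoj : (walk2 v h).IsOpen ((Af v h j).val) := (Walk.lft_isOpen (bfn_spec v h j).1).1
    have hni : (walk2 v h).nxt ((Af v h i).val) = bfn v h i := Walk.nxt_lft (bfn_spec v h i).1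
    have hnj : (walk2 v h).nxt ((Af v h j).val) = bfn v h j := Walk.nxt_lft (bfn_spec v h j).1
    refine Walk.noncross hoi hoj ⟨h1, ?_, ?_⟩
    · rw [hni]; exact h2
    · rw [hni, hnj]; exact h3
  noncrossR := by
    intro i j hc
    obtain ⟨h1, h2, h3⟩ := hc
    have hoi := (bfn_spec v h i).2
    have hoj := (bfn_spec v h j).2
    refine Walk.noncross hoi hoj ⟨h1, h2, h3⟩

lemma mword_mkDiagram : mword (mkDiagram v h) = v := by
  funext i
  rcases fin3_cases (v i) with hv | hv | hv <;> rw [hv]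
  · exact ((mkDiagram v h).mw_eq_zero).2 (Fin.ext (bfn_val0 v h hv))
  · exact ((mkDiagram v h).mw_eq_one).2 (Fin.ext (bfn_val1 v h hv).symm)
  · exact ((mkDiagram v h).mw_eq_two).2 (Fin.ext (bfn_val2 v h hv))

end Surj

lemma exists_diagram {n : ℕ} (l : List (Fin 3)) (hl : l ∈ WS n n n) :
    ∃ m : MDiagram n, List.ofFn (mword m) = l := by
  obtain ⟨hg, hc2, hc1, hc0⟩ := hl
  have hlen : l.length = 3*n := by have := len_eq_counts l; omega
  set v : Fin (3*n) → Fin 3 := fun i => l[i.val]'(by rw [hlen]; exact i.isLt) with hvdef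
  have hv : List.ofFn v = l := by
    apply List.ext_getElem (by simpa using hlen.symm)
    intro i h1 h2
    simp [hvdef]
  have hcnt : ∀ (t : Fin 3) (k : ℕ), cnt v t k = (l.take k).count t := by
    intro t k; unfold cnt; rw [hv]
  have hdomk : ∀ k, cnt v 1 k ≤ cnt v 2 k ∧ cnt v 0 k ≤ cnt v 1 k := by
    intro k
    have := hg (l.take k) (List.take_prefix k l)
    rw [hcnt, hcnt, hcnt]
    exact this
  have hfull : ∀ t : Fin 3, cnt v t (3*n) = l.count t := by
    intro t
    rw [hcnt, List.take_of_length_le (by omega)]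
  have hvd : vdom v :=
    ⟨hdomk, by rw [hfull]; exact hc2, by rw [hfull]; exact hc1, by rw [hfull]; exact hc0⟩
  exact ⟨mkDiagram v hvd, by rw [mword_mkDiagram]; exact hv⟩

/-- The number of M-diagrams on `3n` points equals the 3-dimensional Catalan
number `2·(3n)! / (n!·(n+1)!·(n+2)!)`. -/
theorem stmt15 (n : ℕ) :
    Nat.card (MDiagram n) =
      2 * Nat.factorial (3 * n) /
        (Nat.factorial n * Nat.factorial (n + 1) * Nat.factorial (n + 2)) := by
  have hbij : Function.Bijective
      (fun m : MDiagram n => (⟨List.ofFn (mword m), mword_mem_WS m⟩ : WS n n n)) := by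
    constructor
    · intro m m' he
      have h1 : List.ofFn (mword m) = List.ofFn (mword m') := congrArg Subtype.val he
      exact mword_injective m m' (List.ofFn_injective h1)
    · rintro ⟨l, hl⟩
      obtain ⟨m, hm⟩ := exists_diagram l hl
      exact ⟨m, Subtype.ext hm⟩
  have h1 : Nat.card (MDiagram n) = Nat.card (WS n n n) :=
    Nat.card_congr (Equiv.ofBijective _ hbij)
  rw [h1, Nat.card_coe_set_eq, WS_card]
  have hf := Fc_formula 0 0 n
  norm_num at hf
  symm
  apply Nat.div_eq_of_eq_mul_left
  · positivity
  · rw [hf]; ring
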